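/- For every z ∈ ℂ ∖ ((−∞, ρ̂] ∪ [ρ, ∞)) the value p(z) does not lie in (−∞, 0], and the function ψ(z) := 1/κ − (1/κ)·√(p(z)) + μz (principal branch of the square root) is holomorphic on the cut plane ℂ ∖ ((−∞, ρ̂] ∪ [ρ, ∞)). -/

import Mathlib

/-- For z in the cut plane ℂ ∖ ((−∞, ρ̂] ∪ [ρ, ∞)), p(z) never lies in
(−∞, 0], and ψ(z) = 1/κ − (1/κ)·√(p(z)) + μz is holomorphic on the cut plane. -/
theorem nig_laplace_exponent_holomorphic
    (κ σ θ μ ρ ρhat : ℝ)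
    (hκ : 0 < κ) (hσ : 0 < σ)
    (hρ : ρ = (-θ + Real.sqrt (θ ^ 2 + σ ^ 2 / κ)) / σ ^ 2)
    (hρhat : ρhat = (-θ - Real.sqrt (θ ^ 2 + σ ^ 2 / κ)) / σ ^ 2)
    (p : ℂ → ℂ)
    (hp : ∀ z : ℂ, p z = 1 - 2 * (κ : ℂ) * (θ : ℂ) * z - (κ : ℂ) * (σ : ℂ) ^ 2 * z ^ 2)
    (ψ : ℂ → ℂ)
    (hψ : ∀ z : ℂ, ψ z = 1 / (κ : ℂ) - (1 / (κ : ℂ)) * (p z) ^ (1 / 2 : ℂ) + (μ : ℂ) * z) :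
    (∀ z : ℂ, (z.im ≠ 0 ∨ (ρhat < z.re ∧ z.re < ρ)) →
      ¬((p z).im = 0 ∧ (p z).re ≤ 0)) ∧
    DifferentiableOn ℂ ψ {z : ℂ | z.im ≠ 0 ∨ (ρhat < z.re ∧ z.re < ρ)} := by
  have hσ2 : (0:ℝ) < σ ^ 2 := by positivity
  set s := Real.sqrt (θ ^ 2 + σ ^ 2 / κ) with hsdef
  have hs2 : s ^ 2 = θ ^ 2 + σ ^ 2 / κ := Real.sq_sqrt (by positivity)
  have hs2' : κ * s ^ 2 = κ * θ ^ 2 + σ ^ 2 := by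
    rw [hs2]; field_simp
  have key : ∀ z : ℂ, (z.im ≠ 0 ∨ (ρhat < z.re ∧ z.re < ρ)) →
      ¬((p z).im = 0 ∧ (p z).re ≤ 0) := by
    rintro z hz ⟨him0, hre0⟩
    rw [hp] at him0 hre0
    simp only [Complex.sub_im, Complex.sub_re, Complex.mul_im, Complex.mul_re,
      Complex.one_im, Complex.one_re, Complex.ofReal_im, Complex.ofReal_re,
      Complex.re_ofNat, Complex.im_ofNat, pow_two] at him0 hre0
    ring_nf at him0 hre0
    set x := z.re with hxdef
    set y := z.im with hydef
    clear_value x y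
    -- him0 : -(κ * θ * y * 2) - κ * y * x * σ ^ 2 * 2 = 0
    -- hre0 : 1 - κ * θ * x * 2 + (κ * y ^ 2 * σ ^ 2 - κ * x ^ 2 * σ ^ 2) ≤ 0
    have hfac : κ * y * (θ + σ ^ 2 * x) = 0 := by linarith [him0]
    have main : y ≠ 0 → False := by
      intro hy
      have h1 : θ + σ ^ 2 * x = 0 := by
        rcases mul_eq_zero.mp hfac with h | h
        · rcases mul_eq_zero.mp h with h' | h'
          · exact absurd h' hκ.ne'
          · exact absurd h' hy
        · exact h
      have h2 : κ * x * (θ + σ ^ 2 * x) = 0 := by rw [h1]; ring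
      nlinarith [mul_pos hκ hσ2, sq_nonneg x, sq_nonneg y,
        mul_nonneg (mul_pos hκ hσ2).le (sq_nonneg x),
        mul_nonneg (mul_pos hκ hσ2).le (sq_nonneg y)]
    rcases hz with hy | ⟨h1, h2⟩
    · exact main hy
    · by_cases hy : y = 0
      · subst hy
        rw [hρhat, div_lt_iff₀ hσ2] at h1
        rw [hρ, lt_div_iff₀ hσ2] at h2
        have hA : 0 < s - (x * σ ^ 2 + θ) := by linarith
        have hB : 0 < s + (x * σ ^ 2 + θ) := by linarith
        nlinarith [mul_pos hκ (mul_pos hA hB), hs2', hσ2, mul_pos hκ hσ2]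
      · exact main hy
  refine ⟨key, ?_⟩
  have hfun : ψ = fun z : ℂ =>
      1 / (κ : ℂ) - (1 / (κ : ℂ)) * (p z) ^ (1 / 2 : ℂ) + (μ : ℂ) * z := funext hψ
  have hpfun : p = fun z : ℂ => 1 - 2 * (κ : ℂ) * (θ : ℂ) * z - (κ : ℂ) * (σ : ℂ) ^ 2 * z ^ 2 :=
    funext hp
  rw [hfun]
  intro z hz
  apply DifferentiableAt.differentiableWithinAt
  have hslit : p z ∈ Complex.slitPlane := by
    have h := key z hz
    rw [Complex.mem_slitPlane_iff]
    by_cases him : (p z).im = 0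
    · left
      by_contra hre
      push_neg at hre
      exact h ⟨him, by linarith⟩
    · right; exact him
  have hpdiff : DifferentiableAt ℂ p z := by
    rw [hpfun]; fun_prop
  exact ((differentiableAt_const _).sub ((differentiableAt_const _).mul
    (hpdiff.cpow (differentiableAt_const _) hslit))).add
    ((differentiableAt_const _).mul differentiableAt_id)
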